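/- Type II, Blue winning condition: on a board whose only long piles are exactly one long r-pile ρ and one long b-pile β, with Blue active, if m_b > 0 and m_b + |β|_b > n_r when Blue's turn starts, then Blue wins by applying strategy S at every round. -/

import Mathlib

/-!  A model of the two-player, two-color endgame of *So Long Sucker*.

The two remaining players are Blue and Red, identified with their colors.
A pile is a finite sequence of chips (head = top chip).  A game state
records the board, the number of chips of each color held by each player,
and the active player. -/

/-- The two chip colors (also naming the two remaining players). -/
inductive Color : Type
  | b : Color
  | r : Color
deriving DecidableEq, Repr

/-- The opponent's color. -/
def Color.other : Color → Color
  | Color.b => Color.r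
  | Color.r => Color.b

/-- A pile of chips; the head of the list is the top chip. -/
abbrev Pile := List Color

/-- A game state: the board (a list of piles), the chip counts
`chips p c` = number of `c`-colored chips held by player `p`,
and the active player. -/
structure GState where
  board : List Pile
  chips : Color → Color → ℕ
  active : Color

/-- Total number of chips in player `p`'s possession. -/
def totalChips (s : GState) (p : Color) : ℕ :=
  s.chips p Color.b + s.chips p Color.r

/-- The Next Player Rule in the two-player, two-color endgame, as a function
of the pile played on (before the placement) and the color of the placed
chip: if the placement triggers a capture, the capturing player moves next;
otherwise the player of the other color than the placed chip moves next
(this is the unique player allowed by the Next Player Rule). -/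
def nextActive (π : Pile) (c : Color) : Color :=
  if π.head? = some c then c else c.other

/-- Placement of a chip of color `c` on pile number `i` by the active
player, with the Capture Rule and Next Player Rule applied. -/
inductive PlaceOn (i : ℕ) : GState → GState → Prop
  | noCapture (s : GState) (c : Color)
      (hi : i < s.board.length)
      (hc : 0 < s.chips s.active c)
      (hcap : (s.board.getD i []).head? ≠ some c) :
      PlaceOn i s
        { board := s.board.set i (c :: s.board.getD i []),
          chips := fun p x =>
            s.chips p x - (if p = s.active ∧ x = c then 1 else 0),
          active := c.other }
  | capture (s : GState) (c : Color) (d : Color)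
      (hi : i < s.board.length)
      (hc : 0 < s.chips s.active c)
      (hcap : (s.board.getD i []).head? = some c)
      (hd : d ∈ c :: s.board.getD i []) :
      PlaceOn i s
        { board := s.board.set i [],
          chips := fun p x =>
            (s.chips p x - (if p = s.active ∧ x = c then 1 else 0))
              + (if p = c then
                  (c :: s.board.getD i []).count x - (if d = x then 1 else 0)
                 else 0),
          active := c }

/-- One legal move of the active player: placing a chip on some pile
(resolving captures), discarding a prisoner, or donating a prisoner
to the opponent. -/
inductive Step : GState → GState → Prop
  | place (i : ℕ) (s s' : GState) (h : PlaceOn i s s') : Step s s'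
  | discardPrisoner (s : GState)
      (hc : 0 < s.chips s.active s.active.other) :
      Step s
        { board := s.board,
          chips := fun p x =>
            s.chips p x - (if p = s.active ∧ x = s.active.other then 1 else 0),
          active := s.active }
  | donatePrisoner (s : GState)
      (hc : 0 < s.chips s.active s.active.other) :
      Step s
        { board := s.board,
          chips := fun p x =>
            if x = s.active.other then
              (if p = s.active then s.chips p x - 1 else s.chips p x + 1)
            else s.chips p x,
          active := s.active }

/-- Player `p` has a winning strategy from state `s`: either the opponent is
to move with no chips (and `p` refuses to donate), so the opponent is
eliminated and `p` wins; or it is `p`'s turn and some move of `p` leads to a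
winning position; or it is the opponent's turn and every move of the opponent
leads to a position winning for `p`. -/
inductive WinsFor (p : Color) : GState → Prop
  | elim (s : GState) (h : s.active ≠ p) (h0 : totalChips s s.active = 0) :
      WinsFor p s
  | mine (s s' : GState) (h : s.active = p) (hs : Step s s')
      (hw : WinsFor p s') : WinsFor p s
  | theirs (s : GState) (h : s.active ≠ p) (h0 : 0 < totalChips s s.active)
      (hw : ∀ s', Step s s' → WinsFor p s') : WinsFor p s

/-- The index of the pile on which strategy `S` places its guard:
the longest pile whose top chip has the opponent's color `q`,
or an empty pile if there is no `q`-pile. -/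
def targetIdx (q : Color) (l : List Pile) : ℕ :=
  let opp := l.filter (fun π => π.head? == some q)
  if opp.isEmpty then
    l.findIdx (fun π => π.isEmpty)
  else
    l.findIdx (fun π =>
      (π.head? == some q) &&
        (π.length == (opp.map List.length).foldr Nat.max 0))

/-- The state resulting from the active player `p` playing one full round of
strategy `S`: capture every `p`-pile (discarding an opponent chip from a
captured pile when it contains one, and a `p` chip otherwise), discard all
prisoners, and finally place one guard on the longest opponent-colored pile,
or on an empty pile if there is none.  The turn then passes to the
opponent. -/
def SRound (s : GState) : GState :=
  let p := s.active
  let q := p.other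
  let capt := s.board.filter (fun π => π.head? == some p)
  let b1 := s.board.map (fun π => if π.head? == some p then ([] : Pile) else π)
  let g1 := s.chips p p +
      (capt.map (fun π =>
        if π.contains q then π.count p else π.count p - 1)).sum
  let i := targetIdx q b1
  { board := b1.set i (p :: b1.getD i []),
    chips := fun pl x =>
      if pl = p then (if x = p then g1 - 1 else 0) else s.chips pl x,
    active := q }

/-- Player `p` wins by applying strategy `S` at each of `p`'s rounds,
whatever the opponent plays. -/
inductive WinsWithS (p : Color) : GState → Prop
  | elim (s : GState) (h : s.active ≠ p) (h0 : totalChips s s.active = 0) :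
      WinsWithS p s
  | mine (s : GState) (h : s.active = p) (hg : 0 < s.chips p p)
      (hw : WinsWithS p (SRound s)) : WinsWithS p s
  | theirs (s : GState) (h : s.active ≠ p) (h0 : 0 < totalChips s s.active)
      (hw : ∀ s', Step s s' → WinsWithS p s') : WinsWithS p s

/-- Every pile on the board is an alternating sequence of colors. -/
def Alternating (l : List Pile) : Prop := ∀ π ∈ l, π.Chain' (· ≠ ·)

/-- The long piles (length at least 2) whose top chip has color `c`. -/
def longPiles (c : Color) (l : List Pile) : List Pile :=
  l.filter (fun π => decide (2 ≤ π.length) && (π.head? == some c))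

/-- The sum, over all long `c`-piles, of the number of `c` chips they
contain (e.g. `Σᵢ |ρᵢ|_r` for `c = r`). -/
def longSum (c : Color) (l : List Pile) : ℕ :=
  ((longPiles c l).map (fun π => π.count c)).sum

/-- The maximum, over all long `c`-piles, of the number of `c` chips they
contain (`0` if there is no long `c`-pile). -/
def longMax (c : Color) (l : List Pile) : ℕ :=
  ((longPiles c l).map (fun π => π.count c)).foldr Nat.max 0

/-- The total number of chips in the game (in hands and on the board). -/
def chipCount (s : GState) : ℕ :=
  totalChips s Color.b + totalChips s Color.r + (s.board.map List.length).sum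

namespace SLS

theorem color_cases (x : Color) : x = Color.b ∨ x = Color.r := by cases x <;> simp

theorem bne_br : Color.b ≠ Color.r := by decide

theorem count_b_add_count_r (l : List Color) :
    l.count Color.b + l.count Color.r = l.length := by
  induction l with
  | nil => simp
  | cons a t ih =>
    cases a <;> simp [List.count_cons, ih] <;> omega

theorem sum_map_len_set (l : List Pile) (i : ℕ) (a : Pile) (h : i < l.length) :
    ((l.set i a).map List.length).sum + (l.getD i []).length
      = (l.map List.length).sum + a.length := by
  induction l generalizing i with
  | nil => simp at h
  | cons x t ih =>
    cases i with
    | zero => simp [List.getD]; omega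
    | succ n =>
      simp only [List.set, List.map, List.sum_cons, List.getD_cons_succ]
      have := ih n (by simpa using h)
      omega

theorem countP_set (p : Pile → Bool) (l : List Pile) (i : ℕ) (a : Pile)
    (h : i < l.length) :
    (l.set i a).countP p + (if p (l.getD i []) then 1 else 0)
      = l.countP p + (if p a then 1 else 0) := by
  induction l generalizing i with
  | nil => simp at h
  | cons x t ih =>
    cases i with
    | zero =>
      simp [List.countP_cons, List.getD]
      by_cases h1 : p x <;> by_cases h2 : p a <;> simp [h1, h2] <;> omega
    | succ n =>
      have hg : (x :: t).getD (n+1) [] = t.getD n [] := rfl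
      have hg2 : t.getD n [] = t[n]?.getD [] := List.getD_eq_getElem?_getD ..
      simp only [List.set, List.countP_cons, hg]
      have := ih n (by simpa using h)
      rw [hg2] at this
      by_cases h1 : p x <;> simp [h1] <;> omega

theorem le_foldr_max {L : List ℕ} {a : ℕ} (h : a ∈ L) : a ≤ L.foldr Nat.max 0 := by
  induction L with
  | nil => simp at h
  | cons x t ih =>
    rcases List.mem_cons.1 h with rfl | h
    · exact Nat.le_max_left _ _
    · exact le_trans (ih h) (Nat.le_max_right _ _)

theorem foldr_max_mem {L : List ℕ} (h : L ≠ []) : L.foldr Nat.max 0 ∈ L := by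
  induction L with
  | nil => simp at h
  | cons x t ih =>
    cases t with
    | nil => simp [Nat.max_zero]
    | cons y u =>
      rcases le_or_gt x ((y :: u).foldr Nat.max 0) with h1 | h1
      · have he : Nat.max x ((y :: u).foldr Nat.max 0) = (y :: u).foldr Nat.max 0 :=
          Nat.max_eq_right h1
        rw [List.foldr_cons, he]
        exact List.mem_cons_of_mem _ (ih (by simp))
      · have he : Nat.max x ((y :: u).foldr Nat.max 0) = x := Nat.max_eq_left h1.le
        rw [List.foldr_cons, he]
        simp

theorem sum_gain_le (gf lf : Pile → ℕ) (l : List Pile)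
    (h : ∀ π ∈ l, gf π + 1 ≤ lf π) :
    (l.map gf).sum + l.length ≤ (l.map lf).sum := by
  induction l with
  | nil => simp
  | cons x t ih =>
    have h1 := h x (by simp)
    have h2 := ih (fun π hπ => h π (List.mem_cons_of_mem _ hπ))
    simp only [List.map, List.sum_cons, List.length_cons]
    omega

end SLS

namespace SLS

/-- the long-r predicate -/
def pR : Pile → Bool := fun π => decide (2 ≤ π.length) && (π.head? == some Color.r)

theorem longR_len (l : List Pile) : (longPiles Color.r l).length = l.countP pR := by
  rw [longPiles, List.countP_eq_length_filter]; rfl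

theorem pR_nil : pR ([] : Pile) = false := rfl

theorem pR_cons_b (t : Pile) : pR (Color.b :: t) = false := by
  simp [pR]

theorem pR_head_b {a : Pile} (h : a.head? = some Color.b) : pR a = false := by
  simp [pR, h]

theorem getD_mem {l : List Pile} {i : ℕ} (h : i < l.length) : l.getD i [] ∈ l := by
  rw [List.getD_eq_getElem _ _ h]; exact List.getElem_mem h

theorem countP_set_le {p : Pile → Bool} {a : Pile} (l : List Pile) (i : ℕ)
    (ha : p a = false) : (l.set i a).countP p ≤ l.countP p := by
  by_cases h : i < l.length
  · have := countP_set p l i a h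
    simp [ha] at this
    omega
  · rw [List.set_eq_of_length_le (by omega)]

theorem countP_set_le_succ (p : Pile → Bool) (l : List Pile) (i : ℕ) (a : Pile) :
    (l.set i a).countP p ≤ l.countP p + 1 := by
  by_cases h : i < l.length
  · have := countP_set p l i a h
    by_cases h1 : p a <;> by_cases h2 : p (l.getD i []) <;> simp [h1, h2] at this <;> omega
  · rw [List.set_eq_of_length_le (by omega)]; omega

/-- mapping blue-topped piles to `[]` preserves the long-r count. -/
theorem countP_pR_map (l : List Pile) :
    (l.map (fun π => if π.head? == some Color.b then ([] : Pile) else π)).countP pR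
      = l.countP pR := by
  induction l with
  | nil => rfl
  | cons x t ih =>
    simp only [List.map, List.countP_cons, ih]
    by_cases h : x.head? == some Color.b
    · have hx : pR x = false := pR_head_b (by simpa using h)
      simp [h, hx, pR_nil]
    · simp [h]

/-- measures -/
def mu1 (s : GState) : ℕ := chipCount s + totalChips s Color.r
def mu (s : GState) : ℕ := mu1 s * (mu1 s + 1) + totalChips s Color.b

theorem totB_le_mu1 (s : GState) : totalChips s Color.b ≤ mu1 s := by
  unfold mu1 chipCount; omega

theorem mu_lt_of {s s' : GState} (h1 : mu1 s' ≤ mu1 s)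
    (h2 : mu1 s' < mu1 s ∨ totalChips s' Color.b < totalChips s Color.b) :
    mu s' < mu s := by
  have hb' := totB_le_mu1 s'
  unfold mu
  rcases h2 with h2 | h2
  · nlinarith
  · nlinarith

/-- invariants -/
def InvB (s : GState) : Prop :=
  s.active = Color.b ∧ (longPiles Color.r s.board).length ≤ 1 ∧
    1 ≤ s.chips Color.b Color.b ∧
    (s.chips Color.r Color.r = 0 ∨
      s.chips Color.r Color.r < s.chips Color.b Color.b)

def InvR (s : GState) : Prop :=
  s.active = Color.r ∧ (longPiles Color.r s.board).length = 0 ∧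
    (s.chips Color.r Color.r = 0 ∨
      (s.chips Color.r Color.r ≤ s.chips Color.b Color.b ∧ 1 ≤ s.chips Color.b Color.b))

end SLS

namespace SLS

theorem head_b_count {π : Pile} (h : π.head? = some Color.b) :
    1 ≤ π.count Color.b := by
  cases π with
  | nil => simp at h
  | cons a t =>
    simp only [List.head?_cons, Option.some.injEq] at h
    subst h; simp [List.count_cons]

/-- the guard placement removes all long r-piles (at most one exists). -/
theorem guard_kills (l : List Pile) (h : l.countP pR ≤ 1) :
    (l.set (targetIdx Color.r l)
      (Color.b :: l.getD (targetIdx Color.r l) [])).countP pR = 0 := by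
  rcases Nat.eq_zero_or_pos (l.countP pR) with h0 | h0
  · have := countP_set_le (p := pR) (a := Color.b :: l.getD (targetIdx Color.r l) [])
      l (targetIdx Color.r l) (pR_cons_b _)
    omega
  · -- there is exactly one long r pile
    obtain ⟨π₀, hπ₀l, hπ₀⟩ := List.countP_pos_iff.1 h0
    have hπ₀2 : 2 ≤ π₀.length ∧ π₀.head? = some Color.r := by
      simpa [pR] using hπ₀
    set opp := l.filter (fun π => π.head? == some Color.r) with hopp
    have hπ₀opp : π₀ ∈ opp := by
      rw [hopp]; exact List.mem_filter.2 ⟨hπ₀l, by simp [hπ₀2.2]⟩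
    have hne : opp ≠ [] := fun hh => by simp [hh] at hπ₀opp
    set M := (opp.map List.length).foldr Nat.max 0 with hM
    have hM2 : 2 ≤ M :=
      le_trans hπ₀2.1 (le_foldr_max (List.mem_map_of_mem hπ₀opp))
    have hMmem : M ∈ opp.map List.length := foldr_max_mem (by simpa using hne)
    obtain ⟨τ, hτopp, hτM⟩ := List.mem_map.1 hMmem
    have hτl : τ ∈ l := (List.mem_filter.1 hτopp).1
    have hτr : τ.head? = some Color.r := by
      have := (List.mem_filter.1 hτopp).2; simpa using this
    -- the target index
    have hidx : targetIdx Color.r l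
        = l.findIdx (fun π => (π.head? == some Color.r) && (π.length == M)) := by
      rw [targetIdx]
      simp only [← hopp, ← hM]
      rw [if_neg (by simp [List.isEmpty_iff, hne])]
    set p2 : Pile → Bool := fun π => (π.head? == some Color.r) && (π.length == M) with hp2
    have hex : List.findIdx p2 l < l.length :=
      List.findIdx_lt_length.2 ⟨τ, hτl, by simp [hp2, hτr, hτM]⟩
    set i := List.findIdx p2 l with hi
    set g := l.getD i [] with hg
    have hsat : p2 g = true := by
      rw [hg, List.getD_eq_getElem _ _ hex]
      exact List.findIdx_getElem (w := hex)
    have hpRi : pR g = true := by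
      simp only [hp2, Bool.and_eq_true, beq_iff_eq] at hsat
      simp [pR, hsat.1, hsat.2, hM2]
    rw [hidx, ← hg]
    have hcs := countP_set pR l i (Color.b :: g) hex
    rw [← hg, hpRi, pR_cons_b] at hcs
    simp only [if_true, Bool.false_eq_true, if_false] at hcs
    omega

end SLS

namespace SLS

def captOf (s : GState) : List Pile :=
  s.board.filter (fun π => π.head? == some Color.b)
def gainOf : Pile → ℕ := fun π =>
  if π.contains Color.r then π.count Color.b else π.count Color.b - 1
def gainSum (s : GState) : ℕ := ((captOf s).map gainOf).sum
def b1Of (s : GState) : List Pile :=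
  s.board.map (fun π => if π.head? == some Color.b then ([] : Pile) else π)

theorem SRound_active (s : GState) (hact : s.active = Color.b) :
    (SRound s).active = Color.r := by
  simp [SRound, hact, Color.other]

theorem SRound_board (s : GState) (hact : s.active = Color.b) :
    (SRound s).board = (b1Of s).set (targetIdx Color.r (b1Of s))
        (Color.b :: (b1Of s).getD (targetIdx Color.r (b1Of s)) []) := by
  simp [SRound, hact, Color.other, b1Of]

theorem SRound_chips_bb (s : GState) (hact : s.active = Color.b) :
    (SRound s).chips Color.b Color.b
      = s.chips Color.b Color.b + gainSum s - 1 := by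
  simp only [SRound, hact]
  rfl

theorem SRound_chips_br (s : GState) (hact : s.active = Color.b) :
    (SRound s).chips Color.b Color.r = 0 := by
  simp [SRound, hact, Color.other]

theorem SRound_chips_r (s : GState) (hact : s.active = Color.b) (x : Color) :
    (SRound s).chips Color.r x = s.chips Color.r x := by
  simp [SRound, hact, Color.other]

theorem gain_le (s : GState) (π : Pile) (hmem : π ∈ captOf s) :
    gainOf π + 1 ≤ π.length := by
  have hb : π.head? = some Color.b := by
    have := (List.mem_filter.1 hmem).2; simpa using this
  have hcble := List.count_le_length (l := π) (a := Color.b)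
  have hsum := count_b_add_count_r π
  have hcb := head_b_count hb
  unfold gainOf
  by_cases hr : π.contains Color.r
  · have hrm : Color.r ∈ π := by simpa using hr
    have : 1 ≤ π.count Color.r := List.count_pos_iff.2 hrm
    rw [if_pos hr]; omega
  · rw [if_neg hr]; omega

theorem sum_b1_split (l : List Pile) :
    (((l.map (fun π => if π.head? == some Color.b then ([] : Pile) else π))).map
        List.length).sum
      + ((l.filter (fun π => π.head? == some Color.b)).map List.length).sum
      = (l.map List.length).sum := by
  induction l with
  | nil => rfl
  | cons x t ih =>
    by_cases h : x.head? = some Color.b <;>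
      simp [h, Function.comp] at ih ⊢ <;> omega

theorem sround_longR (s : GState) (hact : s.active = Color.b)
    (hstruct : (longPiles Color.r s.board).length ≤ 1) :
    (longPiles Color.r (SRound s).board).length = 0 := by
  rw [SRound_board s hact, longR_len]
  apply guard_kills
  rw [b1Of, countP_pR_map, ← longR_len]
  exact hstruct

theorem sround_mu (s : GState) (hact : s.active = Color.b)
    (hmb : 1 ≤ s.chips Color.b Color.b) :
    mu (SRound s) < mu s := by
  have hbb := SRound_chips_bb s hact
  have hbr := SRound_chips_br s hact
  have hrb := SRound_chips_r s hact Color.b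
  have hrr := SRound_chips_r s hact Color.r
  have hboard := SRound_board s hact
  -- board sums
  have hsplit := sum_b1_split s.board
  have hGC : gainSum s + (captOf s).length ≤ ((captOf s).map List.length).sum :=
    sum_gain_le gainOf List.length (captOf s) (gain_le s)
  have hA' : (((SRound s).board).map List.length).sum
      ≤ ((b1Of s).map List.length).sum + 1 := by
    rw [hboard]
    by_cases h : targetIdx Color.r (b1Of s) < (b1Of s).length
    · have := sum_map_len_set (b1Of s) (targetIdx Color.r (b1Of s))
        (Color.b :: (b1Of s).getD (targetIdx Color.r (b1Of s)) []) h
      simp only [List.length_cons] at this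
      omega
    · rw [List.set_eq_of_length_le (by omega)]; omega
  have hb1 : ((b1Of s).map List.length).sum
      + ((captOf s).map List.length).sum = (s.board.map List.length).sum := by
    simpa [b1Of, captOf] using hsplit
  have hmu1 : mu1 (SRound s) + (captOf s).length + s.chips Color.b Color.r
      ≤ mu1 s := by
    unfold mu1 chipCount totalChips
    rw [hbb, hbr, hrb, hrr]
    omega
  apply mu_lt_of (by omega)
  rcases List.eq_nil_or_concat (captOf s) with hc | ⟨_, _, hc⟩
  · right
    have hg0 : gainSum s = 0 := by rw [gainSum, hc]; rfl
    unfold totalChips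
    rw [hbb, hbr, hg0]
    omega
  · left
    have : 1 ≤ (captOf s).length := by rw [hc]; simp
    omega

end SLS

namespace SLS

theorem sum_set_nat (l : List ℕ) (i k : ℕ) (h : i < l.length) :
    (l.set i k).sum + l.getD i 0 = l.sum + k := by
  induction l generalizing i with
  | nil => simp at h
  | cons x t ih =>
    cases i with
    | zero => simp [List.getD]; omega
    | succ n =>
      have hg : (x :: t).getD (n+1) 0 = t.getD n 0 := List.getD_cons_succ ..
      simp only [List.set, List.sum_cons, hg]
      have := ih n (by simpa using h)
      omega

theorem len_getD (l : List Pile) (i : ℕ) :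
    (l.map List.length).getD i 0 = (l[i]?.getD []).length := by
  rw [List.getD_eq_getElem?_getD, List.getElem?_map]
  cases l[i]? <;> simp

end SLS

namespace SLS

theorem singleton_of_head (π : Pile) (c : Color) (h : π.head? = some c)
    (hlen : π.length ≤ 1) : π = [c] := by
  cases π with
  | nil => simp at h
  | cons a t =>
    simp only [List.head?_cons, Option.some.injEq] at h
    cases t with
    | nil => rw [h]
    | cons x u => simp at hlen

theorem main (N : ℕ) : ∀ s : GState, mu s < N →
    (InvB s → WinsWithS Color.b s) ∧ (InvR s → WinsWithS Color.b s) := by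
  induction N with
  | zero => intro s h; omega
  | succ N ih =>
    intro s hsN
    constructor
    · -- Blue's turn: play strategy S
      rintro ⟨hact, hstruct, hmb, hchips⟩
      apply WinsWithS.mine s hact hmb
      have hmu := sround_mu s hact hmb
      apply (ih (SRound s) (by omega)).2
      refine ⟨SRound_active s hact, by rw [sround_longR s hact hstruct], ?_⟩
      rw [SRound_chips_r s hact, SRound_chips_bb s hact]
      rcases hchips with h0 | h0
      · exact Or.inl h0
      · rcases Nat.eq_zero_or_pos (s.chips Color.r Color.r) with h1 | h1
        · exact Or.inl h1
        · exact Or.inr (by omega)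
    · -- Red's turn
      rintro ⟨hact, hstruct, hchips⟩
      by_cases h0 : totalChips s s.active = 0
      · exact WinsWithS.elim s (by rw [hact]; decide) h0
      · apply WinsWithS.theirs s (by rw [hact]; decide) (Nat.pos_of_ne_zero h0)
        intro s' hstep
        have hcount0 : s.board.countP pR = 0 := by rw [← longR_len]; exact hstruct
        have hsN' : mu s ≤ N := by omega
        cases hstep with
        | place i _ _ hpl =>
          cases hpl with
          | noCapture c hi hc hcap =>
            rw [hact] at hc
            obtain ⟨π, hπe⟩ : ∃ π, s.board.getD i [] = π := ⟨_, rfl⟩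
            have hπe' : s.board[i]?.getD [] = π := by
              rw [← List.getD_eq_getElem?_getD]; exact hπe
            rw [hπe] at hcap ⊢
            have hKset := sum_set_nat (s.board.map List.length) i
              (π.length + 1) (by simpa using hi)
            rw [len_getD, hπe'] at hKset
            cases c with
            | r =>
              -- pass: red chip placed without capture; blue moves next
              have hR : s.chips Color.r Color.r ≤ s.chips Color.b Color.b
                  ∧ 1 ≤ s.chips Color.b Color.b := by
                rcases hchips with h | h; · omega
                · exact h
              refine (ih _ (lt_of_lt_of_le (mu_lt_of ?_ ?_) hsN')).1 ?_
              · simp only [mu1, chipCount, totalChips]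
                simp [hact]
                omega
              · left
                simp only [mu1, chipCount, totalChips]
                simp [hact]
                omega
              · refine ⟨rfl, ?_, ?_, ?_⟩
                · dsimp only
                  rw [longR_len]
                  have := countP_set_le_succ pR s.board i (Color.r :: π)
                  omega
                · simp [hact]
                  omega
                · simp [hact]
                  omega
            | b =>
              -- red wastes a blue chip; red still to move
              refine (ih _ (lt_of_lt_of_le (mu_lt_of ?_ ?_) hsN')).2 ?_
              · simp only [mu1, chipCount, totalChips]
                simp [hact]
                omega
              · left
                simp only [mu1, chipCount, totalChips]
                simp [hact]
                omega
              · refine ⟨rfl, ?_, ?_⟩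
                · dsimp only
                  rw [longR_len]
                  have := countP_set_le s.board i (pR_cons_b π)
                  omega
                · simpa [hact] using hchips
          | capture c d hi hc hcap hd =>
            rw [hact] at hc
            obtain ⟨π, hπe⟩ : ∃ π, s.board.getD i [] = π := ⟨_, rfl⟩
            have hπe' : s.board[i]?.getD [] = π := by
              rw [← List.getD_eq_getElem?_getD]; exact hπe
            rw [hπe] at hcap hd ⊢
            have hmem : π ∈ s.board := hπe ▸ getD_mem hi
            have hKset := sum_set_nat (s.board.map List.length) i 0 (by simpa using hi)
            rw [len_getD, hπe'] at hKset
            cases c with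
            | r =>
              -- red captures a short r-pile [r]
              have hpr : ¬ pR π = true := (List.countP_eq_zero.1 hcount0) _ hmem
              have hlen : π.length ≤ 1 := by
                simp [pR, hcap] at hpr
                omega
              have hπ2 := singleton_of_head _ _ hcap hlen
              subst hπ2
              have hdr : d = Color.r := by simpa using hd
              subst hdr
              simp only [List.length_cons, List.length_nil] at hKset
              refine (ih _ (lt_of_lt_of_le (mu_lt_of ?_ ?_) hsN')).2 ?_
              · simp only [mu1, chipCount, totalChips]
                simp [hact, List.count_cons]
                omega
              · left
                simp only [mu1, chipCount, totalChips]
                simp [hact, List.count_cons]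
                omega
              · refine ⟨rfl, ?_, ?_⟩
                · dsimp only
                  rw [longR_len]
                  have := countP_set_le (a := ([] : Pile)) s.board i pR_nil
                  omega
                · rcases hchips with h | h
                  · refine Or.inl ?_
                    simp [hact, List.count_cons]
                    omega
                  · refine Or.inr ?_
                    constructor <;> · simp [hact, List.count_cons] <;> omega
            | b =>
              -- red gifts a blue-topped pile to blue
              have hk := head_b_count hcap
              have hcc := count_b_add_count_r π
              have hlen := List.count_le_length (l := π) (a := Color.b)
              have hdd : (if d = Color.b then 1 else 0) + (if d = Color.r then 1 else 0)
                  = 1 := by cases d <;> simp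
              refine (ih _ (lt_of_lt_of_le (mu_lt_of ?_ ?_) hsN')).1 ?_
              · simp only [mu1, chipCount, totalChips]
                simp [hact, List.count_cons]
                omega
              · left
                simp only [mu1, chipCount, totalChips]
                simp [hact, List.count_cons]
                omega
              · refine ⟨rfl, ?_, ?_, ?_⟩
                · dsimp only
                  rw [longR_len]
                  have := countP_set_le (a := ([] : Pile)) s.board i pR_nil
                  omega
                · simp [hact, List.count_cons]
                  omega
                · rcases hchips with h | h
                  · refine Or.inl ?_
                    simp [hact, List.count_cons]
                    omega
                  · refine Or.inr ?_
                    simp [hact, List.count_cons]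
                    omega
        | discardPrisoner _ hc =>
          rw [hact] at hc
          simp only [Color.other] at hc
          refine (ih _ (lt_of_lt_of_le (mu_lt_of ?_ ?_) hsN')).2 ?_
          · simp only [mu1, chipCount, totalChips]
            simp [hact, Color.other]
            omega
          · left
            simp only [mu1, chipCount, totalChips]
            simp [hact, Color.other]
            omega
          · refine ⟨hact, hstruct, ?_⟩
            simpa [hact, Color.other] using hchips
        | donatePrisoner _ hc =>
          rw [hact] at hc
          simp only [Color.other] at hc
          refine (ih _ (lt_of_lt_of_le (mu_lt_of ?_ ?_) hsN')).2 ?_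
          · simp only [mu1, chipCount, totalChips]
            simp [hact, Color.other]
            omega
          · left
            simp only [mu1, chipCount, totalChips]
            simp [hact, Color.other]
            omega
          · refine ⟨hact, hstruct, ?_⟩
            rcases hchips with h | h
            · refine Or.inl ?_
              simp [hact, Color.other]
              omega
            · refine Or.inr ?_
              constructor <;> · simp [hact, Color.other] <;> omega

end SLS

namespace SLS

theorem longSum_le_gainSum (s : GState) (halt : Alternating s.board)
    (hII₂ : (longPiles Color.b s.board).length = 1) :
    longSum Color.b s.board ≤ gainSum s := by
  obtain ⟨β, hβ⟩ := List.length_eq_one_iff.1 hII₂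
  have hβmem : β ∈ longPiles Color.b s.board := by rw [hβ]; simp
  have hβ2 := List.mem_filter.1 hβmem
  have hβb : β ∈ s.board := hβ2.1
  have hβp : 2 ≤ β.length ∧ β.head? = some Color.b := by
    have := hβ2.2; simpa using this
  have hLS : longSum Color.b s.board = β.count Color.b := by
    rw [longSum, hβ]; simp
  have hcont : β.contains Color.r = true := by
    cases β with
    | nil => simp at hβp
    | cons a t =>
      have ha : a = Color.b := by simpa using hβp.2
      subst ha
      cases t with
      | nil => simp at hβp
      | cons x u =>
        have hch := halt _ hβb
        have hxb : Color.b ≠ x := (List.isChain_cons_cons.1 hch).1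
        have hx : x = Color.r := by
          cases x with
          | b => exact absurd rfl hxb
          | r => rfl
        subst hx
        simp
  have hβcapt : β ∈ captOf s :=
    List.mem_filter.2 ⟨hβb, by simp [hβp.2]⟩
  have hgβ : gainOf β = β.count Color.b := by rw [gainOf, if_pos hcont]
  have hmm : β.count Color.b ∈ (captOf s).map gainOf := by
    rw [← hgβ]; exact List.mem_map_of_mem hβcapt
  rw [hLS, gainSum]
  exact List.single_le_sum (fun x _ => Nat.zero_le x) _ hmm

end SLS


/-- **Type II, Blue winning condition.**  Let the board be of type II (all
piles alternating, exactly one long `r`-pile `ρ` and exactly one long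
`b`-pile `β`) and let Blue be the active player.  If `m_b > 0` and
`m_b + |β|_b > n_r` when Blue's turn starts, then Blue wins by applying
strategy `S` at every round. -/
theorem typeII_blue_wins (s : GState)
    (halt : Alternating s.board)
    (hroom : chipCount s ≤ s.board.length)
    (hactive : s.active = Color.b)
    (hII₁ : (longPiles Color.r s.board).length = 1)
    (hII₂ : (longPiles Color.b s.board).length = 1)
    (hmb : 0 < s.chips Color.b Color.b)
    (h : s.chips Color.r Color.r
        < s.chips Color.b Color.b + longSum Color.b s.board) :
    WinsWithS Color.b s := by
  apply WinsWithS.mine s hactive hmb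
  have hgain := SLS.longSum_le_gainSum s halt hII₂
  have hmu := SLS.sround_mu s hactive hmb
  refine (SLS.main (SLS.mu (SRound s) + 1) (SRound s) (by omega)).2 ?_
  refine ⟨SLS.SRound_active s hactive,
    by rw [SLS.sround_longR s hactive (by omega)], ?_⟩
  rw [SLS.SRound_chips_r s hactive, SLS.SRound_chips_bb s hactive]
  rcases Nat.eq_zero_or_pos (s.chips Color.r Color.r) with h1 | h1
  · exact Or.inl h1
  · exact Or.inr ⟨by omega, by omega⟩
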